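/- Let each fᵢ : X → ℝ be L-smooth and τ-weakly convex (0 ≤ τ ≤ L), and f = (1/n)∑ᵢ fᵢ. Then for all x, y ∈ X: (1/n)∑ᵢ ‖∇fᵢ(x) − ∇fᵢ(y)‖² ≤ (L − τ)⟨∇f(x) − ∇f(y), x − y⟩ + Lτ‖x − y‖². -/

import Mathlib

open scoped RealInnerProductSpace

section Aux
variable {X : Type*} [NormedAddCommGroup X] [InnerProductSpace ℝ X] [CompleteSpace X]

lemma aux_hasDerivAt_line {g : X → ℝ} {G : X → X} (hg : ∀ z, HasGradientAt g (G z) z)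
    (x d : X) (t : ℝ) :
    HasDerivAt (fun s : ℝ => g (x + s • d)) ⟪G (x + t • d), d⟫ t := by
  have hc : HasDerivAt (fun s : ℝ => x + s • d) d t := by
    simpa using ((hasDerivAt_id t).smul_const d).const_add x
  have hF : HasFDerivAt g (InnerProductSpace.toDual ℝ X (G (x + t • d))) (x + t • d) :=
    hg (x + t • d)
  simpa [InnerProductSpace.toDual_apply_apply, Function.comp_def] using hF.comp_hasDerivAt t hc

lemma aux_convex_grad_lower {g : X → ℝ} {G : X → X} (hconv : ConvexOn ℝ Set.univ g)
    (hg : ∀ z, HasGradientAt g (G z) z) (x y : X) :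
    g x + ⟪G x, y - x⟫ ≤ g y := by
  set d := y - x with hd
  have hder : ∀ t, HasDerivAt (fun s : ℝ => g (x + s • d)) ⟪G (x + t • d), d⟫ t :=
    aux_hasDerivAt_line hg x d
  have hconvφ : ConvexOn ℝ Set.univ (fun s : ℝ => g (x + s • d)) := by
    have h := hconv.comp_affineMap (AffineMap.lineMap x y)
    have he : (g ∘ (AffineMap.lineMap x y : ℝ →ᵃ[ℝ] X)) = fun s : ℝ => g (x + s • d) := by
      funext s
      simp [AffineMap.lineMap_apply, hd, add_comm]
    rw [he] at h
    simpa using h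
  have hds := hconvφ.deriv_le_slope (Set.mem_univ (0:ℝ)) (Set.mem_univ (1:ℝ)) one_pos
    (hder 0).differentiableAt
  rw [(hder 0).deriv] at hds
  have hslope : slope (fun s : ℝ => g (x + s • d)) 0 1 = g y - g x := by
    simp [slope_def_field, hd]
  rw [hslope] at hds
  have : (0:ℝ) • d = 0 := zero_smul _ _
  simp only [this, add_zero] at hds
  linarith

lemma aux_descent {g : X → ℝ} {G : X → X} {M : ℝ} (hM : 0 ≤ M)
    (hg : ∀ z, HasGradientAt g (G z) z)
    (hlip : ∀ a b : X, ‖G a - G b‖ ≤ M * ‖a - b‖) (x y : X) :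
    g y ≤ g x + ⟪G x, y - x⟫ + M / 2 * ‖y - x‖ ^ 2 := by
  set d := y - x with hd
  set ψ : ℝ → ℝ := fun t => g (x + t • d) - t * ⟪G x, d⟫ - M * t ^ 2 / 2 * ‖d‖ ^ 2 with hψ
  have hder : ∀ t, HasDerivAt ψ (⟪G (x + t • d), d⟫ - ⟪G x, d⟫ - M * t * ‖d‖ ^ 2) t := by
    intro t
    have h1 := aux_hasDerivAt_line hg x d t
    have h2 : HasDerivAt (fun t : ℝ => t * ⟪G x, d⟫) ⟪G x, d⟫ t := by
      simpa using (hasDerivAt_id t).mul_const (⟪G x, d⟫)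
    have h3 : HasDerivAt (fun t : ℝ => M * t ^ 2 / 2 * ‖d‖ ^ 2) (M * t * ‖d‖ ^ 2) t := by
      have h4 : HasDerivAt (fun t : ℝ => t ^ 2) (2 * t) t := by
        simpa using hasDerivAt_pow 2 t
      have h5 := ((h4.const_mul M).div_const 2).mul_const (‖d‖ ^ 2)
      exact h5.congr_deriv (by ring)
    exact (h1.sub h2).sub h3
  have hanti : AntitoneOn ψ (Set.Icc (0:ℝ) 1) := by
    apply antitoneOn_of_deriv_nonpos (convex_Icc 0 1)
    · exact fun t _ => (hder t).continuousAt.continuousWithinAt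
    · exact fun t _ => (hder t).differentiableAt.differentiableWithinAt
    · intro t ht
      rw [interior_Icc] at ht
      rw [(hder t).deriv]
      have h6 : ⟪G (x + t • d) - G x, d⟫ ≤ M * t * ‖d‖ ^ 2 := by
        calc ⟪G (x + t • d) - G x, d⟫ ≤ ‖G (x + t • d) - G x‖ * ‖d‖ :=
              real_inner_le_norm _ _
          _ ≤ (M * ‖(x + t • d) - x‖) * ‖d‖ := by
              apply mul_le_mul_of_nonneg_right _ (norm_nonneg _)
              exact hlip _ _
          _ = M * t * ‖d‖ ^ 2 := by
              rw [add_sub_cancel_left, norm_smul, Real.norm_eq_abs,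
                abs_of_pos ht.1]
              ring
      rw [inner_sub_left] at h6
      linarith
  have h01 : ψ 1 ≤ ψ 0 := hanti (Set.left_mem_Icc.mpr zero_le_one)
    (Set.right_mem_Icc.mpr zero_le_one) zero_le_one
  have e0 : ψ 0 = g x := by simp [hψ]
  have e1 : ψ 1 = g y - ⟪G x, d⟫ - M / 2 * ‖d‖ ^ 2 := by
    have hy1 : x + (1:ℝ) • d = y := by rw [one_smul, hd]; abel
    simp only [hψ, hy1, one_pow, mul_one]
    ring
  rw [e0, e1] at h01
  linarith

lemma aux_lower_bound {g : X → ℝ} {G : X → X} {M : ℝ} (hM : 0 < M)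
    (hconv : ConvexOn ℝ Set.univ g) (hg : ∀ z, HasGradientAt g (G z) z)
    (hlip : ∀ a b : X, ‖G a - G b‖ ≤ M * ‖a - b‖) (x y : X) :
    g x + ⟪G x, y - x⟫ + 1 / (2 * M) * ‖G y - G x‖ ^ 2 ≤ g y := by
  set φ : X → ℝ := fun z => g z - ⟪G x, z⟫ with hφ
  set Gφ : X → X := fun z => G z - G x with hGφ
  have hgφ : ∀ z, HasGradientAt φ (Gφ z) z := by
    intro z
    have h1 : HasFDerivAt g (InnerProductSpace.toDual ℝ X (G z)) z := hg z
    have h2 : HasFDerivAt (fun w : X => ⟪G x, w⟫)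
        (InnerProductSpace.toDual ℝ X (G x)) z := by
      exact (InnerProductSpace.toDual ℝ X (G x)).hasFDerivAt
    have h3 := h1.sub h2
    show HasFDerivAt φ (InnerProductSpace.toDual ℝ X (Gφ z)) z
    simp only [hGφ, map_sub]
    exact h3
  have hconvφ : ConvexOn ℝ Set.univ φ := by
    have hlin : ConcaveOn ℝ Set.univ (fun w : X => ⟪G x, w⟫) := by
      have := ((innerSL ℝ (G x)).toLinearMap).concaveOn convex_univ
      simpa using this
    have := hconv.sub hlin
    simpa [hφ, Pi.sub_def] using this
  have hlipφ : ∀ a b : X, ‖Gφ a - Gφ b‖ ≤ M * ‖a - b‖ := by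
    intro a b
    simpa [hGφ, sub_sub_sub_cancel_right] using hlip a b
  set z := y - (1 / M) • (Gφ y) with hz
  have h1 : φ x ≤ φ z := by
    have := aux_convex_grad_lower hconvφ hgφ x z
    have hx0 : Gφ x = 0 := by simp [hGφ]
    rw [hx0, inner_zero_left, add_zero] at this
    exact this
  have h2 : φ z ≤ φ y + ⟪Gφ y, z - y⟫ + M / 2 * ‖z - y‖ ^ 2 :=
    aux_descent hM.le hgφ hlipφ y z
  have hzy : z - y = -((1 / M) • (Gφ y)) := by rw [hz]; abel
  have e2 : ⟪Gφ y, z - y⟫ = -(1 / M) * ‖Gφ y‖ ^ 2 := by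
    rw [hzy, inner_neg_right, real_inner_smul_right, real_inner_self_eq_norm_sq]
    ring
  have e3 : ‖z - y‖ ^ 2 = (1 / M) ^ 2 * ‖Gφ y‖ ^ 2 := by
    rw [hzy, norm_neg, norm_smul, Real.norm_eq_abs, abs_of_pos (by positivity : (0:ℝ) < 1 / M),
      mul_pow]
  have h3 : φ x ≤ φ y - 1 / (2 * M) * ‖Gφ y‖ ^ 2 := by
    rw [e2, e3] at h2
    have key : φ y + -(1 / M) * ‖Gφ y‖ ^ 2 + M / 2 * ((1 / M) ^ 2 * ‖Gφ y‖ ^ 2)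
        = φ y - 1 / (2 * M) * ‖Gφ y‖ ^ 2 := by
      field_simp
      ring
    exact le_trans h1 (le_of_le_of_eq h2 key)
  have e4 : ⟪G x, y - x⟫ = ⟪G x, y⟫ - ⟪G x, x⟫ := inner_sub_right _ _ _
  simp only [hφ, hGφ] at h3
  rw [e4]
  linarith

lemma aux_cocoercive {g : X → ℝ} {G : X → X} {M : ℝ} (hM : 0 < M)
    (hconv : ConvexOn ℝ Set.univ g) (hg : ∀ z, HasGradientAt g (G z) z)
    (hlip : ∀ a b : X, ‖G a - G b‖ ≤ M * ‖a - b‖) (x y : X) :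
    ‖G x - G y‖ ^ 2 ≤ M * ⟪G x - G y, x - y⟫ := by
  have h1 := aux_lower_bound hM hconv hg hlip x y
  have h2 := aux_lower_bound hM hconv hg hlip y x
  rw [norm_sub_rev] at h2
  rw [norm_sub_rev (G y)] at h1 h2
  have hadd : (1 / M) * ‖G x - G y‖ ^ 2 ≤ ⟪G x, x - y⟫ - ⟪G y, x - y⟫ := by
    have e1 : ⟪G x, y - x⟫ = -⟪G x, x - y⟫ := by
      rw [← inner_neg_right]; congr 1; abel
    rw [e1] at h1
    have esum : (1 / M) * ‖G x - G y‖ ^ 2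
        = 1 / (2 * M) * ‖G x - G y‖ ^ 2 + 1 / (2 * M) * ‖G x - G y‖ ^ 2 := by
      field_simp
      ring
    linarith [h1, h2, esum]
  have e3 : ⟪G x - G y, x - y⟫ = ⟪G x, x - y⟫ - ⟪G y, x - y⟫ := inner_sub_left _ _ _
  have hfin := mul_le_mul_of_nonneg_left hadd hM.le
  have hcan : M * ((1 / M) * ‖G x - G y‖ ^ 2) = ‖G x - G y‖ ^ 2 := by
    field_simp
  rw [e3]
  linarith [hfin, hcan]

lemma aux_grad_half_normSq (c : ℝ) (z : X) :
    HasGradientAt (fun w : X => c / 2 * ‖w‖ ^ 2) (c • z) z := by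
  have h : HasFDerivAt (fun w : X => ⟪w, w⟫)
      ((fderivInnerCLM ℝ (z, z)).comp ((ContinuousLinearMap.id ℝ X).prod
        (ContinuousLinearMap.id ℝ X))) z := (hasFDerivAt_id z).inner ℝ (hasFDerivAt_id z)
  have h2 := h.const_mul (c / 2)
  have heq : (fun w : X => c / 2 * ⟪w, w⟫) = fun w : X => c / 2 * ‖w‖ ^ 2 := by
    funext w; rw [real_inner_self_eq_norm_sq]
  rw [heq] at h2
  show HasFDerivAt _ (InnerProductSpace.toDual ℝ X (c • z)) z
  refine h2.congr_fderiv ?_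
  ext w
  simp [InnerProductSpace.toDual_apply_apply, fderivInnerCLM_apply, real_inner_smul_left,
    real_inner_comm]
  ring

end Aux
/-- If each `fᵢ` is `L`-smooth and `τ`-weakly convex and `f = (1/n)∑ᵢ fᵢ`, then
`(1/n)∑ᵢ‖∇fᵢ(x) − ∇fᵢ(y)‖² ≤ (L − τ)⟨∇f(x) − ∇f(y), x − y⟩ + Lτ‖x − y‖²`. -/
theorem mean_gradient_interpolation
    {X : Type*} [NormedAddCommGroup X] [InnerProductSpace ℝ X]
    [FiniteDimensional ℝ X]
    (n : ℕ) (hn : 0 < n) (f : Fin n → X → ℝ) (L τ : ℝ)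
    (hL : 0 < L) (hτ0 : 0 ≤ τ) (hτL : τ ≤ L)
    (hdiff : ∀ i, Differentiable ℝ (f i))
    (hlip : ∀ i, ∀ x y : X, ‖gradient (f i) x - gradient (f i) y‖ ≤ L * ‖x - y‖)
    (hwc : ∀ i, ConvexOn ℝ Set.univ (fun x => f i x + τ / 2 * ‖x‖ ^ 2))
    (F : X → ℝ) (hF : F = fun y => (1 / n : ℝ) * ∑ i, f i y)
    (x y : X) :
    (1 / n : ℝ) * ∑ i, ‖gradient (f i) x - gradient (f i) y‖ ^ 2 ≤
      (L - τ) * ⟪gradient F x - gradient F y, x - y⟫ + L * τ * ‖x - y‖ ^ 2 := by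
  have hgrad : ∀ i z, HasGradientAt (f i) (gradient (f i) z) z := fun i z =>
    (hdiff i z).hasGradientAt
  have hgi : ∀ i z, HasGradientAt (fun w => f i w + τ / 2 * ‖w‖ ^ 2)
      (gradient (f i) z + τ • z) z := by
    intro i z
    have h1 : HasFDerivAt (f i) (InnerProductSpace.toDual ℝ X (gradient (f i) z)) z := hgrad i z
    have h2 : HasFDerivAt (fun w : X => τ / 2 * ‖w‖ ^ 2)
        (InnerProductSpace.toDual ℝ X (τ • z)) z := aux_grad_half_normSq τ z
    have h3 := h1.add h2
    show HasFDerivAt _ (InnerProductSpace.toDual ℝ X (gradient (f i) z + τ • z)) z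
    rw [map_add]
    exact h3
  have hlipi : ∀ i (a b : X),
      ‖(gradient (f i) a + τ • a) - (gradient (f i) b + τ • b)‖ ≤ (L + τ) * ‖a - b‖ := by
    intro i a b
    have hre : (gradient (f i) a + τ • a) - (gradient (f i) b + τ • b)
        = (gradient (f i) a - gradient (f i) b) + τ • (a - b) := by
      rw [smul_sub]; abel
    rw [hre]
    calc ‖(gradient (f i) a - gradient (f i) b) + τ • (a - b)‖
        ≤ ‖gradient (f i) a - gradient (f i) b‖ + ‖τ • (a - b)‖ := norm_add_le _ _
      _ ≤ L * ‖a - b‖ + τ * ‖a - b‖ := by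
          refine add_le_add (hlip i a b) ?_
          rw [norm_smul, Real.norm_eq_abs, abs_of_nonneg hτ0]
      _ = (L + τ) * ‖a - b‖ := by ring
  have hMpos : (0:ℝ) < L + τ := by linarith
  have key : ∀ i, ‖gradient (f i) x - gradient (f i) y‖ ^ 2
      ≤ (L - τ) * ⟪gradient (f i) x - gradient (f i) y, x - y⟫ + L * τ * ‖x - y‖ ^ 2 := by
    intro i
    have hco := aux_cocoercive hMpos (hwc i) (hgi i) (hlipi i) x y
    set u := gradient (f i) x - gradient (f i) y with huu
    have heq : (gradient (f i) x + τ • x) - (gradient (f i) y + τ • y) = u + τ • (x - y) := by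
      rw [huu, smul_sub]; abel
    rw [heq] at hco
    have e1 : ‖u + τ • (x - y)‖ ^ 2
        = ‖u‖ ^ 2 + 2 * (τ * ⟪u, x - y⟫) + τ ^ 2 * ‖x - y‖ ^ 2 := by
      rw [norm_add_sq_real, real_inner_smul_right, norm_smul, Real.norm_eq_abs,
        abs_of_nonneg hτ0, mul_pow]
    have e2 : ⟪u + τ • (x - y), x - y⟫ = ⟪u, x - y⟫ + τ * ‖x - y‖ ^ 2 := by
      rw [inner_add_left, real_inner_smul_left, real_inner_self_eq_norm_sq]
    rw [e1, e2] at hco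
    nlinarith [hco]
  have hGF : ∀ z : X, HasGradientAt F ((1 / n : ℝ) • ∑ i, gradient (f i) z) z := by
    intro z
    have h1 : HasFDerivAt (fun w => ∑ i, f i w)
        (∑ i, InnerProductSpace.toDual ℝ X (gradient (f i) z)) z :=
      HasFDerivAt.fun_sum (fun i _ => hgrad i z)
    have h2 := h1.const_mul ((1 : ℝ) / n)
    rw [hF]
    show HasFDerivAt _ (InnerProductSpace.toDual ℝ X ((1 / n : ℝ) • ∑ i, gradient (f i) z)) z
    simpa [map_smul, map_sum] using h2
  have hsubg : gradient F x - gradient F y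
      = (1 / n : ℝ) • ∑ i, (gradient (f i) x - gradient (f i) y) := by
    rw [(hGF x).gradient, (hGF y).gradient, ← smul_sub, ← Finset.sum_sub_distrib]
  have hinner : ⟪gradient F x - gradient F y, x - y⟫
      = (1 / n : ℝ) * ∑ i, ⟪gradient (f i) x - gradient (f i) y, x - y⟫ := by
    rw [hsubg, real_inner_smul_left, sum_inner]
  have hsum : ∑ i, ‖gradient (f i) x - gradient (f i) y‖ ^ 2
      ≤ (L - τ) * ∑ i, ⟪gradient (f i) x - gradient (f i) y, x - y⟫
        + (n : ℝ) * (L * τ * ‖x - y‖ ^ 2) := by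
    have h4 := Finset.sum_le_sum (s := Finset.univ) (fun i _ => key i)
    refine h4.trans_eq ?_
    rw [Finset.sum_add_distrib, ← Finset.mul_sum, Finset.sum_const, Finset.card_univ,
      Fintype.card_fin, nsmul_eq_mul]
  have hn' : (0:ℝ) < n := by exact_mod_cast hn
  have hmul := mul_le_mul_of_nonneg_left hsum (by positivity : (0:ℝ) ≤ 1 / n)
  rw [hinner]
  refine hmul.trans_eq ?_
  have hne : (n:ℝ) ≠ 0 := hn'.ne'
  field_simp
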